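/- If the parameters of the sabra shell model satisfy a + b + c = 0, then the nonlinear term formally conserves energy: for any complex sequence (u_n) with u_0 = u_{-1} = 0 and finitely many nonzero terms, the real part of the sum over n of B(u,u)_n · conj(u_n) equals zero, where B(u,u)_n = -i(a k_{n+1} u_{n+2} conj(u_{n+1}) + b k_n u_{n+1} conj(u_{n-1}) - c k_{n-1} u_{n-1} u_{n-2}) and k_n = k_0 λ^n. -/
import Mathlib


open Complex

/-- Wavenumbers of the sabra shell model: `k n = k0 * λ^n`. -/
noncomputable def kk (k0 lam : ℝ) (n : ℤ) : ℝ := k0 * lam ^ n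

/-- Nonlinear term of the sabra shell model. -/
noncomputable def sB (a b c k0 lam : ℝ) (u : ℤ → ℂ) (n : ℤ) : ℂ :=
  -Complex.I * ((a : ℂ) * (kk k0 lam (n + 1) : ℝ) * u (n + 2) * (starRingEnd ℂ) (u (n + 1))
    + (b : ℂ) * (kk k0 lam n : ℝ) * u (n + 1) * (starRingEnd ℂ) (u (n - 1))
    - (c : ℂ) * (kk k0 lam (n - 1) : ℝ) * u (n - 1) * u (n - 2))

/-- if `a + b + c = 0`, then for any finitely supported complex sequence
with `u n = 0` for `n ≤ 0`, the nonlinear term formally conserves energy: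
`Re (∑_{n ≥ 1} B(u,u)_n * conj (u_n)) = 0`. -/
theorem sabra_energy_conservation
    (a b c k0 lam : ℝ) (hk0 : 0 < k0) (hlam : 1 < lam)
    (habc : a + b + c = 0)
    (u : ℤ → ℂ) (hb : ∀ n : ℤ, n ≤ 0 → u n = 0)
    (hfin : (Function.support u).Finite) :
    (∑' n : ℕ, sB a b c k0 lam u ((n : ℤ) + 1) * (starRingEnd ℂ) (u ((n : ℤ) + 1))).re = 0 := by
  classical
  -- choose a bound N on the support
  obtain ⟨B, hB⟩ := hfin.bddAbove
  set N : ℕ := B.toNat + 1 with hN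
  have hu : ∀ m : ℤ, (N : ℤ) ≤ m → u m = 0 := by
    intro m hm
    by_contra h
    have := hB (Function.mem_support.mpr h)
    have : m ≤ B := this
    have hB' : B ≤ (B.toNat : ℤ) := Int.self_le_toNat B
    omega
  set g : ℤ → ℝ := fun m => kk k0 lam m * (u (m+1) * (starRingEnd ℂ) (u m) * (starRingEnd ℂ) (u (m-1))).im with hg
  have key : ∀ j : ℤ, (sB a b c k0 lam u j * (starRingEnd ℂ) (u j)).re
      = a * g (j+1) + b * g j + c * g (j-1) := by
    intro j
    simp only [sB, hg]
    have e1 : j + 1 + 1 = j + 2 := by ring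
    have e2 : j + 1 - 1 = j := by ring
    have e3 : j - 1 + 1 = j := by ring
    have e4 : j - 1 - 1 = j - 2 := by ring
    rw [e1, e2, e3, e4]
    simp [Complex.mul_re, Complex.mul_im, Complex.add_re, Complex.add_im,
      Complex.sub_re, Complex.sub_im]
    ring
  set F : ℕ → ℂ := fun n => sB a b c k0 lam u ((n : ℤ) + 1) * (starRingEnd ℂ) (u ((n : ℤ) + 1)) with hF
  have hFzero : ∀ n : ℕ, n ∉ Finset.range N → F n = 0 := by
    intro n hn
    simp only [Finset.mem_range, not_lt] at hn
    have : u ((n : ℤ) + 1) = 0 := hu _ (by exact_mod_cast by omega)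
    simp [hF, this]
  have htsum : (∑' n : ℕ, F n) = ∑ n ∈ Finset.range N, F n := tsum_eq_sum hFzero
  rw [htsum, Complex.re_sum]
  set G : ℕ → ℝ := fun n => g (n : ℤ) with hG
  have hre : ∀ n ∈ Finset.range N, (F n).re = a * G (n+2) + b * G (n+1) + c * G n := by
    intro n _
    have := key ((n : ℤ) + 1)
    simp only [hF, hG]
    have c1 : ((n:ℤ)+1+1) = (((n+2 : ℕ)) : ℤ) := by push_cast; ring
    have c2 : ((n:ℤ)+1) = (((n+1:ℕ)) : ℤ) := by push_cast; ring
    have c3 : ((n:ℤ)+1-1) = ((n:ℕ) : ℤ) := by push_cast; ring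
    rw [this, c1, c3]
    rw [c2]
  rw [Finset.sum_congr rfl hre]
  -- boundary values of G
  have hG0 : G 0 = 0 := by simp [hG, hg, hb 0 le_rfl]
  have hG1 : G 1 = 0 := by simp [hG, hg, hb 0 le_rfl]
  have hGN : ∀ m : ℕ, N ≤ m → G m = 0 := by
    intro m hm
    have : u (m : ℤ) = 0 := hu _ (by exact_mod_cast hm)
    simp [hG, hg, this]
  have S2 : ∑ n ∈ Finset.range N, G (n+2) = ∑ n ∈ Finset.range N, G n := by
    have h1 : ∑ n ∈ Finset.range (N+1), G (n+1) = ∑ n ∈ Finset.range N, G (n+1+1) + G 1 :=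
      Finset.sum_range_succ' (fun n => G (n+1)) N
    have h2 : ∑ n ∈ Finset.range (N+2), G n = ∑ n ∈ Finset.range (N+1), G (n+1) + G 0 :=
      Finset.sum_range_succ' G (N+1)
    have h3 : ∑ n ∈ Finset.range (N+2), G n = ∑ n ∈ Finset.range N, G n + G N + G (N+1) := by
      rw [Finset.sum_range_succ, Finset.sum_range_succ]
    rw [hGN N le_rfl, hGN (N+1) (by omega)] at h3
    simp only [hG0, hG1, add_zero] at h1 h2 h3
    linarith
  have S1 : ∑ n ∈ Finset.range N, G (n+1) = ∑ n ∈ Finset.range N, G n := by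
    have h2 : ∑ n ∈ Finset.range (N+1), G n = ∑ n ∈ Finset.range N, G (n+1) + G 0 :=
      Finset.sum_range_succ' G N
    have h3 : ∑ n ∈ Finset.range (N+1), G n = ∑ n ∈ Finset.range N, G n + G N :=
      Finset.sum_range_succ G N
    rw [hGN N le_rfl] at h3
    simp only [hG0, add_zero] at h2 h3
    linarith
  have : ∑ n ∈ Finset.range N, (a * G (n+2) + b * G (n+1) + c * G n)
      = (a + b + c) * ∑ n ∈ Finset.range N, G n := by
    simp only [Finset.sum_add_distrib, ← Finset.mul_sum, S1, S2]
    ring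
  rw [this, habc, zero_mul]
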